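/- Let x, y, z be positive hyperreals with x ≻ y ≻ z. Then there exists a standard real α ∈ (0,1) such that α·x + (1-α)·z ≻ y. (Qualitative version of the upper half of the continuity axiom, A'3.) -/
import Mathlib


open Hyperreal

/-- `x` is qualitatively larger than `y`. -/
def QGT (x y : ℝ*) : Prop := ∃ r : ℝ, 0 < r ∧ (r : ℝ*) ≤ (x - y) / x

/-- qualitative indifference -/
def QSIM (x y : ℝ*) : Prop := ¬ QGT x y ∧ ¬ QGT y x

theorem stmt18 (x y z : ℝ*) (hx : 0 < x) (hy : 0 < y) (hz : 0 < z)
    (h1 : QGT x y) (h2 : QGT y z) :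
    ∃ a : ℝ, 0 < a ∧ a < 1 ∧
      QGT ((a : ℝ*) * x + ((1 : ℝ*) - (a : ℝ*)) * z) y := by
  obtain ⟨r, hr, hrx⟩ := h1
  rw [le_div_iff₀ hx] at hrx
  have hyx : y ≤ (1 - (r : ℝ*)) * x := by nlinarith
  have hr1 : r < 1 := by
    have h : (r : ℝ*) < 1 := by nlinarith
    exact_mod_cast h
  have ht : (0:ℝ) < 1 - r/2 := by linarith
  have htH : (0:ℝ*) < 1 - (r:ℝ*)/2 := by push_cast; exact_mod_cast ht
  refine ⟨1 - r/2, by linarith, by linarith, ?_⟩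
  set w : ℝ* := ((1 - r/2 : ℝ) : ℝ*) * x + ((1:ℝ*) - ((1 - r/2 : ℝ) : ℝ*)) * z with hw
  have hwpos : 0 < w := by
    rw [hw]; push_cast
    have hrH : (0:ℝ*) < (r:ℝ*) := by exact_mod_cast hr
    nlinarith
  refine ⟨(r/2)/(1 - r/2), div_pos (by linarith) ht, ?_⟩
  rw [le_div_iff₀ hwpos]
  push_cast
  rw [div_mul_eq_mul_div, div_le_iff₀ htH]
  have hrH : (0:ℝ*) < (r:ℝ*) := by exact_mod_cast hr
  have hr1H : (r:ℝ*) < 1 := by exact_mod_cast hr1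
  rw [hw]; push_cast
  nlinarith [mul_pos hrH hz, mul_le_mul_of_nonneg_right hyx (le_of_lt htH),
    mul_nonneg (mul_nonneg (le_of_lt hrH) (sub_nonneg.2 (le_of_lt hr1H))) (le_of_lt hz)]
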